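/- If a finite simple graph G has a near-obstruction (P, z), then G has a Meyniel obstruction contained in the subgraph induced by the vertices of P together with z. -/

import Mathlib

open SimpleGraph

/-- The set of chords of a closed walk `c` in `G`: edges of `G` joining two
vertices of `c` that are not edges of `c` (i.e. not consecutive on `c`). -/
def SimpleGraph.cycleChords {V : Type*} (G : SimpleGraph V) {u : V} (c : G.Walk u u) :
    Set (Sym2 V) :=
  {e | e ∈ G.edgeSet ∧ (∀ x ∈ e, x ∈ c.support) ∧ e ∉ c.edges}

/-- A Meyniel obstruction in `G` is an odd cycle of length at least five with
at most one chord. -/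
def SimpleGraph.HasMeynielObstruction {V : Type*} (G : SimpleGraph V) : Prop :=
  ∃ (u : V) (c : G.Walk u u), c.IsCycle ∧ Odd c.length ∧ 5 ≤ c.length ∧
    (G.cycleChords c).ncard ≤ 1

/-- `v i` and `v j` span a chord of the path `v 0 - v 1 - ⋯ - v p`: an edge of `G`
joining two non-consecutive vertices of the path (with `i < j`). -/
def SimpleGraph.IsPathChord {V : Type*} (G : SimpleGraph V) (p : ℕ) (v : ℕ → V)
    (i j : ℕ) : Prop :=
  i + 2 ≤ j ∧ j ≤ p ∧ G.Adj (v i) (v j)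

/-- A near-obstruction `(P, z)`: a path `P = v 0 - ⋯ - v p` with `p` odd, `p ≥ 3`,
having at most one chord, any chord being of the form `v (t-1) v (t+1)` with
`0 < t < p - 1`, together with a vertex `z` off `P` adjacent to both ends of `P`,
satisfying one of the conditions of Type 1–4. -/
def SimpleGraph.IsNearObstruction {V : Type*} (G : SimpleGraph V) (p : ℕ) (v : ℕ → V)
    (z : V) : Prop :=
  Odd p ∧ 3 ≤ p ∧ Set.InjOn v (Set.Iic p) ∧
  (∀ i, i < p → G.Adj (v i) (v (i + 1))) ∧
  -- any chord of `P` is of the form `v (t-1) v (t+1)` with `0 < t < p - 1`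
  (∀ i j, G.IsPathChord p v i j → ∃ t, 0 < t ∧ t < p - 1 ∧ i = t - 1 ∧ j = t + 1) ∧
  -- `P` has at most one chord
  (∀ i j i' j', G.IsPathChord p v i j → G.IsPathChord p v i' j' → i = i' ∧ j = j') ∧
  (∀ i, i ≤ p → z ≠ v i) ∧ G.Adj z (v 0) ∧ G.Adj z (v p) ∧
  -- Type 1
  ((G.Adj (v 0) (v 2) ∧ ¬ G.Adj z (v 1) ∧ ¬ G.Adj z (v 2)) ∨
  -- Type 2
   (G.Adj (v 1) (v 3) ∧ (¬ G.Adj z (v 1) ∨ ¬ G.Adj z (v 3))) ∨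
  -- Type 3
   (¬ G.Adj (v 0) (v 2) ∧ ¬ G.Adj z (v 1)) ∨
  -- Type 4
   (¬ G.Adj (v 0) (v 2) ∧ ¬ G.Adj (v 1) (v 3) ∧ G.Adj z (v 1) ∧ ¬ G.Adj z (v 2)))


namespace NearObs

variable {V : Type*} {G : SimpleGraph V}

def buildW (G : SimpleGraph V) (f : ℕ → V) (n : ℕ)
    (hadj : ∀ k, k < n → G.Adj (f k) (f (k+1))) :
    (d : ℕ) → (m : ℕ) → m + d = n → G.Walk (f m) (f n)
  | 0, m, h => Walk.nil.copy rfl (congrArg f (by omega))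
  | (d+1), m, h =>
      Walk.cons (hadj m (by omega)) (buildW G f n hadj d (m+1) (by omega))

lemma buildW_support (f : ℕ → V) (n : ℕ) (hadj : ∀ k, k < n → G.Adj (f k) (f (k+1))) :
    ∀ (d m : ℕ) (h : m + d = n),
      (buildW G f n hadj d m h).support = (List.range (d+1)).map (fun k => f (m+k))
  | 0, m, h => by simp [buildW, List.range_succ]
  | (d+1), m, h => by
      rw [buildW, Walk.support_cons, buildW_support f n hadj d (m+1) (by omega)]
      conv_rhs => rw [List.range_succ_eq_map, List.map_cons, List.map_map]
      congr 1
      refine List.map_congr_left fun a _ => ?_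
      show f (m+1+a) = f (m+(a+1))
      congr 1
      omega

lemma buildW_edges (f : ℕ → V) (n : ℕ) (hadj : ∀ k, k < n → G.Adj (f k) (f (k+1))) :
    ∀ (d m : ℕ) (h : m + d = n),
      (buildW G f n hadj d m h).edges
        = (List.range d).map (fun k => s(f (m+k), f (m+k+1)))
  | 0, m, h => by simp [buildW]
  | (d+1), m, h => by
      rw [buildW, Walk.edges_cons, buildW_edges f n hadj d (m+1) (by omega)]
      conv_rhs => rw [List.range_succ_eq_map, List.map_cons, List.map_map]
      congr 1
      refine List.map_congr_left fun a _ => ?_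
      show s(f (m+1+a), f (m+1+a+1)) = s(f (m+(a+1)), f (m+(a+1)+1))
      have e1 : m+1+a = m+(a+1) := by omega
      rw [e1]

lemma buildW_length (f : ℕ → V) (n : ℕ) (hadj : ∀ k, k < n → G.Adj (f k) (f (k+1))) :
    ∀ (d m : ℕ) (h : m + d = n), (buildW G f n hadj d m h).length = d
  | 0, m, h => by simp [buildW]
  | (d+1), m, h => by
      rw [buildW, Walk.length_cons, buildW_length f n hadj d (m+1) (by omega)]

lemma build_cycle (f : ℕ → V) (n : ℕ) (hn : 3 ≤ n)
    (hadj : ∀ k, k < n → G.Adj (f k) (f (k+1)))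
    (hcyc : f n = f 0)
    (hinj : ∀ k l, k < n → l < n → f k = f l → k = l) :
    ∃ c : G.Walk (f 0) (f 0), c.IsCycle ∧ c.length = n ∧
      (∀ x ∈ c.support, ∃ k, k < n ∧ x = f k) ∧
      (∀ e, e ∈ c.edges ↔ ∃ k, k < n ∧ e = s(f k, f (k+1))) := by
  refine ⟨(buildW G f n hadj n 0 (by omega)).copy rfl hcyc, ?_, ?_, ?_, ?_⟩
  · rw [Walk.isCycle_def]
    refine ⟨?_, ?_, ?_⟩
    · -- trail: edges nodup
      constructor
      rw [Walk.edges_copy, buildW_edges]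
      refine List.Nodup.map_on ?_ List.nodup_range
      intro x hx y hy hxy
      simp only [List.mem_range] at hx hy
      simp only [Nat.zero_add] at hxy
      rcases Sym2.eq_iff.1 hxy with ⟨h1, h2⟩ | ⟨h1, h2⟩
      · exact hinj _ _ hx hy h1
      · -- f x = f (y+1), f (x+1) = f y
        by_cases hy1 : y + 1 < n
        · have hxy1 : x = y + 1 := hinj _ _ hx hy1 h1
          subst hxy1
          by_cases hx1 : y + 1 + 1 < n
          · have := hinj _ _ hx1 hy h2
            omega
          · rw [show y+1+1 = n by omega, hcyc] at h2
            have := hinj y 0 hy (by omega) h2.symm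
            omega
        · have hyn : y + 1 = n := by omega
          rw [hyn, hcyc] at h1
          have hx0 : x = 0 := hinj _ _ hx (by omega) h1
          have h1y : x + 1 = y := by
            by_cases hxx : x + 1 < n
            · exact hinj _ _ hxx hy h2
            · omega
          omega
    · intro hnil
      have := buildW_length (G := G) f n hadj n 0 (by omega)
      rw [← Walk.length_copy _ rfl hcyc, hnil, Walk.length_nil] at this
      omega
    · rw [Walk.support_copy, buildW_support, List.range_succ_eq_map, List.map_cons,
        List.tail_cons, List.map_map]
      refine List.Nodup.map_on ?_ List.nodup_range
      intro x hx y hy hxy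
      simp only [List.mem_range] at hx hy
      simp only [Function.comp, Nat.zero_add, Nat.succ_eq_add_one] at hxy
      by_cases hx1 : x + 1 < n
      · by_cases hy1 : y + 1 < n
        · have := hinj _ _ hx1 hy1 hxy; omega
        · have hyn : y + 1 = n := by omega
          rw [hyn, hcyc] at hxy
          have := hinj _ _ hx1 (by omega) hxy; omega
      · have hxn : x + 1 = n := by omega
        rw [hxn, hcyc] at hxy
        by_cases hy1 : y + 1 < n
        · have := hinj _ _ (by omega) hy1 hxy; omega
        · omega
  · rw [Walk.length_copy, buildW_length]
  · intro x hx
    rw [Walk.support_copy, buildW_support] at hx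
    simp only [List.mem_map, List.mem_range] at hx
    obtain ⟨k, hk, rfl⟩ := hx
    by_cases hkn : k < n
    · exact ⟨k, hkn, by simp⟩
    · have : k = n := by omega
      subst this
      exact ⟨0, by omega, by simp [hcyc]⟩
  · intro e
    rw [Walk.edges_copy, buildW_edges]
    simp only [List.mem_map, List.mem_range, Nat.zero_add]
    constructor
    · rintro ⟨k, hk, rfl⟩; exact ⟨k, hk, rfl⟩
    · rintro ⟨k, hk, rfl⟩; exact ⟨k, hk, rfl⟩


variable {V : Type*}

theorem cseg (G : SimpleGraph V) (p : ℕ) (v : ℕ → V) (z : V)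
    (hInj : Set.InjOn v (Set.Iic p))
    (hAdj : ∀ i, i < p → G.Adj (v i) (v (i + 1)))
    (hzne : ∀ i, i ≤ p → z ≠ v i)
    (i j : ℕ) (hij : i < j) (hjp : j ≤ p)
    (hzi : G.Adj z (v i)) (hzj : G.Adj z (v j)) :
    ∃ c : G.Walk z z, c.IsCycle ∧ c.length = j - i + 2 ∧
      (∀ x ∈ c.support, x ∈ insert z (v '' Set.Iic p)) ∧
      ∀ e ∈ G.cycleChords c,
        (∃ m, i < m ∧ m < j ∧ G.Adj z (v m) ∧ e = s(z, v m)) ∨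
        (∃ k l, i ≤ k ∧ k + 2 ≤ l ∧ l ≤ j ∧ G.Adj (v k) (v l) ∧ e = s(v k, v l)) := by
  set n : ℕ := j - i + 2 with hn
  set f : ℕ → V := fun k => if 1 ≤ k ∧ k ≤ j - i + 1 then v (i + k - 1) else z with hf
  have hf0 : f 0 = z := by simp [hf]
  have hfn : f n = z := by
    show (if _ then _ else _) = z
    rw [if_neg (by omega)]
  have hfv : ∀ k, 1 ≤ k → k ≤ j - i + 1 → f k = v (i + k - 1) := by
    intro k h1 h2
    show (if _ then _ else _) = _
    rw [if_pos ⟨h1, h2⟩]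
  have hfz : ∀ k, k < n → f k ≠ z → 1 ≤ k ∧ k ≤ j - i + 1 := by
    intro k hk hne
    by_contra hc
    exact hne (by show (if _ then _ else _) = z; rw [if_neg hc])
  have hadj : ∀ k, k < n → G.Adj (f k) (f (k + 1)) := by
    intro k hk
    rcases Nat.eq_zero_or_pos k with rfl | hk1
    · rw [hf0, hfv 1 (by omega) (by omega)]
      exact hzi
    · by_cases hkl : k = n - 1
      · have e1 : i + k - 1 = j := by omega
        rw [hfv k (by omega) (by omega), e1, show k + 1 = n by omega, hfn]
        exact hzj.symm
      · rw [hfv k (by omega) (by omega), hfv (k + 1) (by omega) (by omega)]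
        have e1 : i + (k + 1) - 1 = (i + k - 1) + 1 := by omega
        rw [e1]
        exact hAdj (i + k - 1) (by omega)
  have hcyc : f n = f 0 := by rw [hfn, hf0]
  have hinj : ∀ k l, k < n → l < n → f k = f l → k = l := by
    intro k l hk hl he
    by_cases h1 : 1 ≤ k ∧ k ≤ j - i + 1
    · by_cases h2 : 1 ≤ l ∧ l ≤ j - i + 1
      · rw [hfv k h1.1 h1.2, hfv l h2.1 h2.2] at he
        have := hInj (Set.mem_Iic.2 (by omega : i + k - 1 ≤ p))
          (Set.mem_Iic.2 (by omega : i + l - 1 ≤ p)) he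
        omega
      · exfalso
        have hl0 : f l = z := by show (if _ then _ else _) = z; rw [if_neg h2]
        rw [hfv k h1.1 h1.2, hl0] at he
        exact hzne _ (by omega) he.symm
    · have hk0 : f k = z := by show (if _ then _ else _) = z; rw [if_neg h1]
      by_cases h2 : 1 ≤ l ∧ l ≤ j - i + 1
      · exfalso
        rw [hfv l h2.1 h2.2, hk0] at he
        exact hzne _ (by omega) he
      · omega
  obtain ⟨c0, hcyc', hlen, hsupp, hedge⟩ := build_cycle f n (by omega) hadj hcyc hinj
  refine ⟨c0.copy hf0 hf0, ?_, ?_, ?_, ?_⟩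
  · exact (SimpleGraph.Walk.isCycle_copy _ _).2 hcyc'
  · rw [Walk.length_copy]; omega
  · intro x hx
    rw [Walk.support_copy] at hx
    obtain ⟨k, hk, rfl⟩ := hsupp x hx
    by_cases h1 : 1 ≤ k ∧ k ≤ j - i + 1
    · rw [hfv k h1.1 h1.2]
      exact Set.mem_insert_iff.2 (Or.inr ⟨i + k - 1, Set.mem_Iic.2 (by omega), rfl⟩)
    · have : f k = z := by show (if _ then _ else _) = z; rw [if_neg h1]
      rw [this]
      exact Set.mem_insert _ _
  · -- chords
    have hsupp' : ∀ x ∈ (c0.copy hf0 hf0).support, x = z ∨ ∃ m, i ≤ m ∧ m ≤ j ∧ x = v m := by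
      intro x hx
      rw [Walk.support_copy] at hx
      obtain ⟨k, hk, rfl⟩ := hsupp x hx
      by_cases h1 : 1 ≤ k ∧ k ≤ j - i + 1
      · exact Or.inr ⟨i + k - 1, by omega, by omega, hfv k h1.1 h1.2⟩
      · exact Or.inl (by show (if _ then _ else _) = z; rw [if_neg h1])
    have hezi : s(z, v i) ∈ (c0.copy hf0 hf0).edges := by
      rw [Walk.edges_copy]
      refine (hedge _).2 ⟨0, by omega, ?_⟩
      rw [hf0, hfv 1 (by omega) (by omega), Nat.add_sub_cancel]
    have hezj : s(z, v j) ∈ (c0.copy hf0 hf0).edges := by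
      rw [Walk.edges_copy]
      refine (hedge _).2 ⟨n - 1, by omega, ?_⟩
      rw [show n - 1 + 1 = n by omega, hfn, hfv (n-1) (by omega) (by omega),
        show i + (n-1) - 1 = j by omega]
      exact Sym2.eq_swap
    have hec : ∀ m, i ≤ m → m < j → s(v m, v (m + 1)) ∈ (c0.copy hf0 hf0).edges := by
      intro m h1 h2
      rw [Walk.edges_copy]
      refine (hedge _).2 ⟨m - i + 1, by omega, ?_⟩
      rw [hfv (m - i + 1) (by omega) (by omega), hfv (m - i + 1 + 1) (by omega) (by omega),
        show i + (m - i + 1) - 1 = m by omega, show i + (m - i + 1 + 1) - 1 = m + 1 by omega]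
    intro e he
    obtain ⟨heE, heS, heNe⟩ := he
    induction e using Sym2.ind with
    | _ x y =>
    rw [SimpleGraph.mem_edgeSet] at heE
    have hx := hsupp' x (heS x (Sym2.mem_mk_left x y))
    have hy := hsupp' y (heS y (Sym2.mem_mk_right x y))
    have zkey : ∀ m, i ≤ m → m ≤ j → G.Adj z (v m) → s(z, v m) ∉ (c0.copy hf0 hf0).edges →
        i < m ∧ m < j := by
      intro m h1 h2 ha hne
      rcases eq_or_lt_of_le h1 with rfl | h1'
      · exact absurd hezi hne
      rcases eq_or_lt_of_le h2 with rfl | h2'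
      · exact absurd hezj hne
      exact ⟨h1', h2'⟩
    have vkey : ∀ m m', i ≤ m → m < m' → m' ≤ j → G.Adj (v m) (v m') →
        s(v m, v m') ∉ (c0.copy hf0 hf0).edges → m + 2 ≤ m' := by
      intro m m' h1 h2 h3 ha hne
      by_cases hmc : m' = m + 1
      · subst hmc
        exact absurd (hec m h1 (by omega)) hne
      · omega
    rcases hx with rfl | ⟨m, him, hmj, rfl⟩
    · rcases hy with rfl | ⟨m, him, hmj, rfl⟩
      · exact absurd heE (G.loopless.irrefl _)
      · have := zkey m him hmj heE heNe
        exact Or.inl ⟨m, this.1, this.2, heE, rfl⟩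
    · rcases hy with rfl | ⟨m', him', hmj', rfl⟩
      · rw [Sym2.eq_swap] at heNe ⊢
        have := zkey m him hmj heE.symm heNe
        exact Or.inl ⟨m, this.1, this.2, heE.symm, rfl⟩
      · rcases Nat.lt_trichotomy m m' with hlt | rfl | hgt
        · have := vkey m m' him hlt hmj' heE heNe
          exact Or.inr ⟨m, m', him, this, hmj', heE, rfl⟩
        · exact absurd heE (G.loopless.irrefl _)
        · rw [Sym2.eq_swap] at heNe ⊢
          have := vkey m' m him' hgt hmj heE.symm heNe
          exact Or.inr ⟨m', m, him', this, hmj, heE.symm, rfl⟩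

theorem cskip (G : SimpleGraph V) (p : ℕ) (v : ℕ → V) (z : V)
    (hInj : Set.InjOn v (Set.Iic p))
    (hAdj : ∀ i, i < p → G.Adj (v i) (v (i + 1)))
    (hzne : ∀ i, i ≤ p → z ≠ v i)
    (i t j : ℕ) (hit : i + 1 ≤ t) (htj : t + 1 ≤ j) (hjp : j ≤ p)
    (hzi : G.Adj z (v i)) (hzj : G.Adj z (v j))
    (hchord : G.Adj (v (t - 1)) (v (t + 1)))
    (hEC : ∀ k l, l ≤ p → k + 2 ≤ l → G.Adj (v k) (v l) → k = t - 1 ∧ l = t + 1) :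
    ∃ c : G.Walk z z, c.IsCycle ∧ c.length = j - i + 1 ∧
      (∀ x ∈ c.support, x ∈ insert z (v '' Set.Iic p)) ∧
      ∀ e ∈ G.cycleChords c,
        ∃ m, i < m ∧ m < j ∧ m ≠ t ∧ G.Adj z (v m) ∧ e = s(z, v m) := by
  set n : ℕ := j - i + 1 with hn
  set f : ℕ → V := fun k =>
    if 1 ≤ k ∧ k ≤ j - i then (if k ≤ t - i then v (i + k - 1) else v (i + k)) else z with hf
  have hf0 : f 0 = z := by simp [hf]
  have hfn : f n = z := by
    show (if _ then _ else _) = z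
    rw [if_neg (by omega)]
  have hfv1 : ∀ k, 1 ≤ k → k ≤ t - i → f k = v (i + k - 1) := by
    intro k h1 h2
    show (if _ then _ else _) = _
    rw [if_pos ⟨h1, by omega⟩, if_pos h2]
  have hfv2 : ∀ k, t - i < k → k ≤ j - i → f k = v (i + k) := by
    intro k h1 h2
    show (if _ then _ else _) = _
    rw [if_pos ⟨by omega, h2⟩, if_neg (by omega)]
  have hfzz : ∀ k, ¬(1 ≤ k ∧ k ≤ j - i) → f k = z := by
    intro k hk
    show (if _ then _ else _) = z
    rw [if_neg hk]
  have hadj : ∀ k, k < n → G.Adj (f k) (f (k + 1)) := by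
    intro k hk
    rcases Nat.eq_zero_or_pos k with rfl | hk1
    · rw [hf0, hfv1 1 (by omega) (by omega), show i + 1 - 1 = i by omega]
      exact hzi
    · by_cases hkl : k = n - 1
      · rw [hfv2 k (by omega) (by omega), show i + k = j by omega,
          show k + 1 = n by omega, hfn]
        exact hzj.symm
      · by_cases hk2 : k + 1 ≤ t - i
        · rw [hfv1 k (by omega) (by omega), hfv1 (k + 1) (by omega) hk2,
            show i + (k + 1) - 1 = (i + k - 1) + 1 by omega]
          exact hAdj (i + k - 1) (by omega)
        · by_cases hk3 : k ≤ t - i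
          · rw [hfv1 k (by omega) hk3, hfv2 (k + 1) (by omega) (by omega),
              show i + k - 1 = t - 1 by omega, show i + (k + 1) = t + 1 by omega]
            exact hchord
          · rw [hfv2 k (by omega) (by omega), hfv2 (k + 1) (by omega) (by omega),
              show i + (k + 1) = (i + k) + 1 by omega]
            exact hAdj (i + k) (by omega)
  have hcyc : f n = f 0 := by rw [hfn, hf0]
  have hgk : ∀ k x, 1 ≤ k → k ≤ j - i → f k = x →
      ∃ m, i ≤ m ∧ m ≤ j ∧ m ≠ t ∧ x = v m ∧
        ((k ≤ t - i ∧ m = i + k - 1) ∨ (t - i < k ∧ m = i + k)) := by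
    intro k x h1 h2 hx
    by_cases hk : k ≤ t - i
    · rw [hfv1 k h1 hk] at hx
      exact ⟨i + k - 1, by omega, by omega, by omega, hx.symm, Or.inl ⟨hk, rfl⟩⟩
    · rw [hfv2 k (by omega) h2] at hx
      exact ⟨i + k, by omega, by omega, by omega, hx.symm, Or.inr ⟨by omega, rfl⟩⟩
  have hinj : ∀ k l, k < n → l < n → f k = f l → k = l := by
    intro k l hk hl he
    by_cases h1 : 1 ≤ k ∧ k ≤ j - i
    · obtain ⟨m, _, hm2, _, hxm, hcase⟩ := hgk k (f k) h1.1 h1.2 rfl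
      by_cases h2 : 1 ≤ l ∧ l ≤ j - i
      · obtain ⟨m', _, hm2', _, hxm', hcase'⟩ := hgk l (f l) h2.1 h2.2 rfl
        have : m = m' := hInj (Set.mem_Iic.2 (by omega)) (Set.mem_Iic.2 (by omega))
          (by rw [← hxm, ← hxm', he])
        omega
      · rw [hfzz l h2] at he
        exact absurd (he ▸ hxm : z = v m) (hzne m (by omega))
    · rw [hfzz k h1] at he
      by_cases h2 : 1 ≤ l ∧ l ≤ j - i
      · obtain ⟨m', _, hm2', _, hxm', hcase'⟩ := hgk l (f l) h2.1 h2.2 rfl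
        exact absurd (he.symm ▸ hxm' : z = v m') (hzne m' (by omega))
      · omega
  obtain ⟨c0, hcyc', hlen, hsupp, hedge⟩ := build_cycle f n (by omega) hadj hcyc hinj
  refine ⟨c0.copy hf0 hf0, (SimpleGraph.Walk.isCycle_copy _ _).2 hcyc', by rw [Walk.length_copy]; omega, ?_, ?_⟩
  · intro x hx
    rw [Walk.support_copy] at hx
    obtain ⟨k, hk, rfl⟩ := hsupp x hx
    by_cases h1 : 1 ≤ k ∧ k ≤ j - i
    · obtain ⟨m, _, hm2, _, hxm, _⟩ := hgk k (f k) h1.1 h1.2 rfl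
      rw [hxm]
      exact Set.mem_insert_iff.2 (Or.inr ⟨m, Set.mem_Iic.2 (by omega), rfl⟩)
    · rw [hfzz k h1]
      exact Set.mem_insert _ _
  · have hsupp' : ∀ x ∈ (c0.copy hf0 hf0).support,
        x = z ∨ ∃ m, i ≤ m ∧ m ≤ j ∧ m ≠ t ∧ x = v m := by
      intro x hx
      rw [Walk.support_copy] at hx
      obtain ⟨k, hk, rfl⟩ := hsupp x hx
      by_cases h1 : 1 ≤ k ∧ k ≤ j - i
      · obtain ⟨m, hm1, hm2, hm3, hxm, _⟩ := hgk k (f k) h1.1 h1.2 rfl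
        exact Or.inr ⟨m, hm1, hm2, hm3, hxm⟩
      · exact Or.inl (hfzz k h1)
    have hezi : s(z, v i) ∈ (c0.copy hf0 hf0).edges := by
      rw [Walk.edges_copy]
      refine (hedge _).2 ⟨0, by omega, ?_⟩
      rw [hf0, hfv1 1 (by omega) (by omega), Nat.add_sub_cancel]
    have hezj : s(z, v j) ∈ (c0.copy hf0 hf0).edges := by
      rw [Walk.edges_copy]
      refine (hedge _).2 ⟨n - 1, by omega, ?_⟩
      rw [show n - 1 + 1 = n by omega, hfn, hfv2 (n - 1) (by omega) (by omega),
        show i + (n - 1) = j by omega]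
      exact Sym2.eq_swap
    have hech : s(v (t - 1), v (t + 1)) ∈ (c0.copy hf0 hf0).edges := by
      rw [Walk.edges_copy]
      refine (hedge _).2 ⟨t - i, by omega, ?_⟩
      rw [hfv1 (t - i) (by omega) (by omega), hfv2 (t - i + 1) (by omega) (by omega),
        show i + (t - i) - 1 = t - 1 by omega, show i + (t - i + 1) = t + 1 by omega]
    have hec : ∀ m, i ≤ m → m < j → m ≠ t - 1 → m ≠ t →
        s(v m, v (m + 1)) ∈ (c0.copy hf0 hf0).edges := by
      intro m h1 h2 h3 h4
      rw [Walk.edges_copy]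
      by_cases hm : m + 1 ≤ t - 1
      · refine (hedge _).2 ⟨m - i + 1, by omega, ?_⟩
        rw [hfv1 (m - i + 1) (by omega) (by omega), hfv1 (m - i + 1 + 1) (by omega) (by omega),
          show i + (m - i + 1) - 1 = m by omega, show i + (m - i + 1 + 1) - 1 = m + 1 by omega]
      · refine (hedge _).2 ⟨m - i, by omega, ?_⟩
        rw [hfv2 (m - i) (by omega) (by omega), hfv2 (m - i + 1) (by omega) (by omega),
          show i + (m - i) = m by omega, show i + (m - i + 1) = m + 1 by omega]
    intro e he
    obtain ⟨heE, heS, heNe⟩ := he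
    induction e using Sym2.ind with
    | _ x y =>
    rw [SimpleGraph.mem_edgeSet] at heE
    have hx := hsupp' x (heS x (Sym2.mem_mk_left x y))
    have hy := hsupp' y (heS y (Sym2.mem_mk_right x y))
    have zkey : ∀ m, i ≤ m → m ≤ j → G.Adj z (v m) → s(z, v m) ∉ (c0.copy hf0 hf0).edges →
        i < m ∧ m < j := by
      intro m h1 h2 ha hne
      rcases eq_or_lt_of_le h1 with rfl | h1'
      · exact absurd hezi hne
      rcases eq_or_lt_of_le h2 with rfl | h2'
      · exact absurd hezj hne
      exact ⟨h1', h2'⟩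
    have vkey : ∀ m m', i ≤ m → m < m' → m' ≤ j → m ≠ t → m' ≠ t → G.Adj (v m) (v m') →
        s(v m, v m') ∉ (c0.copy hf0 hf0).edges → False := by
      intro m m' h1 h2 h3 h4 h5 ha hne
      by_cases hmc : m' = m + 1
      · subst hmc
        exact hne (hec m h1 (by omega) (by omega) h4)
      · obtain ⟨he1, he2⟩ := hEC m m' (by omega) (by omega) ha
        subst he1; subst he2
        exact hne hech
    rcases hx with rfl | ⟨m, him, hmj, hmt, rfl⟩
    · rcases hy with rfl | ⟨m, him, hmj, hmt, rfl⟩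
      · exact absurd heE (G.loopless.irrefl _)
      · have := zkey m him hmj heE heNe
        exact ⟨m, this.1, this.2, hmt, heE, rfl⟩
    · rcases hy with rfl | ⟨m', him', hmj', hmt', rfl⟩
      · rw [Sym2.eq_swap] at heNe ⊢
        have := zkey m him hmj heE.symm heNe
        exact ⟨m, this.1, this.2, hmt, heE.symm, rfl⟩
      · rcases Nat.lt_trichotomy m m' with hlt | rfl | hgt
        · exact absurd heE (fun ha => vkey m m' him hlt hmj' hmt hmt' ha heNe)
        · exact absurd heE (G.loopless.irrefl _)
        · rw [Sym2.eq_swap] at heNe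
          exact absurd heE.symm (fun ha => vkey m' m him' hgt hmj hmt' hmt ha heNe)

lemma ncard_le_one_of_eq {α : Type*} [Finite α] {s : Set α}
    (h : ∀ x ∈ s, ∀ y ∈ s, x = y) : s.ncard ≤ 1 := by
  rw [Set.ncard_le_one_iff (Set.toFinite _)]
  intro a b ha hb
  exact h a ha b hb

lemma finishC {V : Type*} [Fintype V] (G : SimpleGraph V) (p : ℕ) (v : ℕ → V) (z : V)
    (c : G.Walk z z) (hc1 : c.IsCycle) (L : ℕ) (hc2 : c.length = L)
    (hodd : L % 2 = 1) (h5 : 5 ≤ L)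
    (hc3 : ∀ x ∈ c.support, x ∈ insert z (v '' Set.Iic p))
    (hpair : ∀ e ∈ G.cycleChords c, ∀ e' ∈ G.cycleChords c, e = e') :
    ∃ (u : V) (c : G.Walk u u), c.IsCycle ∧ Odd c.length ∧ 5 ≤ c.length ∧
      (G.cycleChords c).ncard ≤ 1 ∧ ∀ x ∈ c.support, x ∈ insert z (v '' Set.Iic p) := by
  refine ⟨z, c, hc1, by rw [hc2]; exact Nat.odd_iff.2 hodd, by rw [hc2]; exact h5,
    ncard_le_one_of_eq hpair, hc3⟩

/-- The main construction in the case where `z` is not adjacent to `v 1` and any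
chord of the path has `t ≥ 2`. -/
lemma machine {V : Type*} [Fintype V] (G : SimpleGraph V) (p : ℕ) (v : ℕ → V) (z : V)
    (hOdd : Odd p) (hp3 : 3 ≤ p) (hInj : Set.InjOn v (Set.Iic p))
    (hAdj : ∀ i, i < p → G.Adj (v i) (v (i + 1)))
    (hUniq : ∀ i j i' j', G.IsPathChord p v i j → G.IsPathChord p v i' j' → i = i' ∧ j = j')
    (hzne : ∀ i, i ≤ p → z ≠ v i) (hz0 : G.Adj z (v 0)) (hzp : G.Adj z (v p))
    (hEC0 : ∀ k l, k + 2 ≤ l → l ≤ p → G.Adj (v k) (v l) →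
      ∃ t, 0 < t ∧ t < p - 1 ∧ k = t - 1 ∧ l = t + 1)
    (hnz1 : ¬ G.Adj z (v 1))
    (hT : ∀ t, 0 < t → t < p - 1 → G.Adj (v (t - 1)) (v (t + 1)) → 2 ≤ t) :
    ∃ (u : V) (c : G.Walk u u), c.IsCycle ∧ Odd c.length ∧ 5 ≤ c.length ∧
      (G.cycleChords c).ncard ≤ 1 ∧ ∀ x ∈ c.support, x ∈ insert z (v '' Set.Iic p) := by
  have hPodd : p % 2 = 1 := Nat.odd_iff.1 hOdd
  -- b : least odd index with z ~ v b
  set b := sInf {k | k % 2 = 1 ∧ G.Adj z (v k)} with hbdef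
  have hbMem : b % 2 = 1 ∧ G.Adj z (v b) := by
    have hpmem : p ∈ {k | k % 2 = 1 ∧ G.Adj z (v k)} := ⟨hPodd, hzp⟩
    exact Nat.sInf_mem ⟨p, hpmem⟩
  have hbMin : ∀ k, k % 2 = 1 → k < b → ¬ G.Adj z (v k) := by
    intro k h1 h2 hadj
    exact Nat.notMem_of_lt_sInf h2 ⟨h1, hadj⟩
  have hbp : b ≤ p := Nat.sInf_le (⟨hPodd, hzp⟩ : p ∈ {k | k % 2 = 1 ∧ G.Adj z (v k)})
  have hb3 : 3 ≤ b := by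
    have : b ≠ 1 := fun hb1 => hnz1 (hb1 ▸ hbMem.2)
    have : 1 ≤ b := by omega
    omega
  -- a' : largest z-neighbour index below b
  set a' := sSup {k | k < b ∧ G.Adj z (v k)} with ha'def
  have hbdd : BddAbove {k | k < b ∧ G.Adj z (v k)} := ⟨b, fun x hx => le_of_lt hx.1⟩
  have ha'Mem : a' < b ∧ G.Adj z (v a') := by
    have h0mem : 0 ∈ {k | k < b ∧ G.Adj z (v k)} := ⟨by omega, hz0⟩
    exact Nat.sSup_mem ⟨0, h0mem⟩ hbdd
  have ha'Max : ∀ k, k < b → G.Adj z (v k) → k ≤ a' := fun k h1 h2 => le_csSup hbdd ⟨h1, h2⟩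
  have ha'ev : a' % 2 = 0 := by
    by_contra hc
    exact hbMin a' (by omega) ha'Mem.1 ha'Mem.2
  by_cases hgap : a' + 1 < b
  · -- C(a', b), length b - a' + 2, at most one chord (a chord of P)
    obtain ⟨c, hc1, hc2, hc3, hc4⟩ := cseg G p v z hInj hAdj hzne a' b (by omega) hbp
      ha'Mem.2 hbMem.2
    refine finishC G p v z c hc1 _ hc2 (by omega) (by omega) hc3 ?_
    have noZ : ∀ e ∈ G.cycleChords c,
        ∃ k l, a' ≤ k ∧ k + 2 ≤ l ∧ l ≤ b ∧ G.Adj (v k) (v l) ∧ e = s(v k, v l) := by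
      intro e he
      rcases hc4 e he with ⟨m, hm1, hm2, hmz, rfl⟩ | h
      · exact absurd (ha'Max m hm2 hmz) (by omega)
      · exact h
    intro e he e' he'
    obtain ⟨k, l, hk, hkl, hl, ha1, rfl⟩ := noZ e he
    obtain ⟨k', l', hk', hkl', hl', ha1', rfl⟩ := noZ e' he'
    obtain ⟨rfl, rfl⟩ := hUniq k l k' l' ⟨hkl, by omega, ha1⟩ ⟨hkl', by omega, ha1'⟩
    rfl
  · -- b = a' + 1
    have hba' : b = a' + 1 := by omega
    have ha'2 : 2 ≤ a' := by omega
    set a'' := sSup {k | k < a' ∧ G.Adj z (v k)} with ha''def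
    have hbdd2 : BddAbove {k | k < a' ∧ G.Adj z (v k)} := ⟨a', fun x hx => le_of_lt hx.1⟩
    have ha''Mem : a'' < a' ∧ G.Adj z (v a'') := by
      have h0mem : 0 ∈ {k | k < a' ∧ G.Adj z (v k)} := ⟨by omega, hz0⟩
      exact Nat.sSup_mem ⟨0, h0mem⟩ hbdd2
    have ha''Max : ∀ k, k < a' → G.Adj z (v k) → k ≤ a'' := fun k h1 h2 => le_csSup hbdd2 ⟨h1, h2⟩
    have ha''ev : a'' % 2 = 0 := by
      by_contra hc
      exact hbMin a'' (by omega) (by omega) ha''Mem.2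
    have ha''2 : a'' + 2 ≤ a' := by omega
    by_cases hchordIn : ∃ t, 0 < t ∧ t < p - 1 ∧ G.Adj (v (t - 1)) (v (t + 1)) ∧
        a'' ≤ t - 1 ∧ t + 1 ≤ b
    · obtain ⟨t, ht0, htp, htadj, htr1, htr2⟩ := hchordIn
      have ht2 : 2 ≤ t := hT t ht0 htp htadj
      have hECt : ∀ k l, l ≤ p → k + 2 ≤ l → G.Adj (v k) (v l) → k = t - 1 ∧ l = t + 1 := by
        intro k l hlp h2 hkl
        exact hUniq k l (t - 1) (t + 1) ⟨h2, hlp, hkl⟩ ⟨by omega, by omega, htadj⟩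
      by_cases htea : t = a'
      · -- b = t + 1 < p ; cc : least z-neighbour above b
        have hbltp : b < p := by omega
        set cc := sInf {k | b + 1 ≤ k ∧ G.Adj z (v k)} with hccdef
        have hccMem : b + 1 ≤ cc ∧ G.Adj z (v cc) := by
          have hpmem : p ∈ {k | b + 1 ≤ k ∧ G.Adj z (v k)} := ⟨by omega, hzp⟩
          exact Nat.sInf_mem ⟨p, hpmem⟩
        have hccMin : ∀ k, b + 1 ≤ k → k < cc → ¬ G.Adj z (v k) := by
          intro k h1 h2 hadj
          exact Nat.notMem_of_lt_sInf h2 ⟨h1, hadj⟩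
        have hccp : cc ≤ p := Nat.sInf_le (⟨by omega, hzp⟩ : p ∈ {k | b + 1 ≤ k ∧ G.Adj z (v k)})
        by_cases hc1 : cc = b + 1
        · -- skip cycle from a'' to b+1 through the chord, one chord s(z, v b)
          obtain ⟨c, hh1, hh2, hh3, hh4⟩ := cskip G p v z hInj hAdj hzne a'' t (b + 1)
            (by omega) (by omega) (by omega) ha''Mem.2 (by rw [← hc1]; exact hccMem.2)
            htadj hECt
          refine finishC G p v z c hh1 _ hh2 (by omega) (by omega) hh3 ?_
          have pin : ∀ e ∈ G.cycleChords c, e = s(z, v b) := by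
            intro e he
            obtain ⟨m, hm1, hm2, hm3, hmz, rfl⟩ := hh4 e he
            have hmb : m = b := by
              by_contra hmb
              have h1 : m ≤ a' := ha'Max m (by omega) hmz
              have h2 : m ≤ a'' := ha''Max m (by omega) hmz
              omega
            rw [hmb]
          intro e he e' he'
          rw [pin e he, pin e' he']
        · by_cases hpar : cc % 2 = 1
          · -- C(a', cc) with single chord s(z, v b)
            obtain ⟨c, hh1, hh2, hh3, hh4⟩ := cseg G p v z hInj hAdj hzne a' cc (by omega)
              hccp ha'Mem.2 hccMem.2
            refine finishC G p v z c hh1 _ hh2 (by omega) (by omega) hh3 ?_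
            have pin : ∀ e ∈ G.cycleChords c, e = s(z, v b) := by
              intro e he
              rcases hh4 e he with ⟨m, hm1, hm2, hmz, rfl⟩ | ⟨k, l, hk, hkl, hl, ha1, rfl⟩
              · have hmb : m = b := by
                  by_contra hmb
                  rcases Nat.lt_or_ge m b with hmlt | hmgt
                  · have := ha'Max m hmlt hmz
                    omega
                  · exact hccMin m (by omega) (by omega) hmz
                rw [hmb]
              · exfalso
                obtain ⟨hk1, hl1⟩ := hECt k l (by omega) hkl ha1
                omega
            intro e he e' he'
            rw [pin e he, pin e' he']
          · -- C(b, cc) with no chord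
            obtain ⟨c, hh1, hh2, hh3, hh4⟩ := cseg G p v z hInj hAdj hzne b cc (by omega)
              hccp hbMem.2 hccMem.2
            refine finishC G p v z c hh1 _ hh2 (by omega) (by omega) hh3 ?_
            have pin : ∀ e ∈ G.cycleChords c, False := by
              intro e he
              rcases hh4 e he with ⟨m, hm1, hm2, hmz, rfl⟩ | ⟨k, l, hk, hkl, hl, ha1, rfl⟩
              · exact hccMin m (by omega) (by omega) hmz
              · obtain ⟨hk1, hl1⟩ := hECt k l (by omega) hkl ha1
                omega
            intro e he e' he'
            exact (pin e he).elim
      · -- t < a'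
        have htlt : t + 1 ≤ a' := by omega
        by_cases hbig : a'' + 4 ≤ a'
        · -- skip cycle from a'' to a', no chords
          obtain ⟨c, hh1, hh2, hh3, hh4⟩ := cskip G p v z hInj hAdj hzne a'' t a'
            (by omega) htlt (by omega) ha''Mem.2 ha'Mem.2 htadj hECt
          refine finishC G p v z c hh1 _ hh2 (by omega) (by omega) hh3 ?_
          have pin : ∀ e ∈ G.cycleChords c, False := by
            intro e he
            obtain ⟨m, hm1, hm2, hm3, hmz, rfl⟩ := hh4 e he
            have := ha''Max m (by omega) hmz
            omega
          intro e he e' he'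
          exact (pin e he).elim
        · -- a' - a'' = 2, t = a' - 1
          have ha''e : a'' + 2 = a' := by omega
          have hte : t = a' - 1 := by omega
          have ha''g2 : 2 ≤ a'' := by omega
          set a3 := sSup {k | k < a'' ∧ G.Adj z (v k)} with ha3def
          have hbdd3 : BddAbove {k | k < a'' ∧ G.Adj z (v k)} := ⟨a'', fun x hx => le_of_lt hx.1⟩
          have ha3Mem : a3 < a'' ∧ G.Adj z (v a3) := by
            have h0mem : 0 ∈ {k | k < a'' ∧ G.Adj z (v k)} := ⟨by omega, hz0⟩
            exact Nat.sSup_mem ⟨0, h0mem⟩ hbdd3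
          have ha3Max : ∀ k, k < a'' → G.Adj z (v k) → k ≤ a3 :=
            fun k h1 h2 => le_csSup hbdd3 ⟨h1, h2⟩
          have ha3ev : a3 % 2 = 0 := by
            by_contra hc
            exact hbMin a3 (by omega) (by omega) ha3Mem.2
          obtain ⟨c, hh1, hh2, hh3, hh4⟩ := cskip G p v z hInj hAdj hzne a3 t a'
            (by omega) htlt (by omega) ha3Mem.2 ha'Mem.2 htadj hECt
          refine finishC G p v z c hh1 _ hh2 (by omega) (by omega) hh3 ?_
          have pin : ∀ e ∈ G.cycleChords c, e = s(z, v a'') := by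
            intro e he
            obtain ⟨m, hm1, hm2, hm3, hmz, rfl⟩ := hh4 e he
            have hmb : m = a'' := by
              by_contra hmb
              have h1 : m ≤ a'' := ha''Max m (by omega) hmz
              have h2 : m ≤ a3 := ha3Max m (by omega) hmz
              omega
            rw [hmb]
          intro e he e' he'
          rw [pin e he, pin e' he']
    · -- no chord meeting [a'', b] : C(a'', b) with single chord s(z, v a')
      obtain ⟨c, hh1, hh2, hh3, hh4⟩ := cseg G p v z hInj hAdj hzne a'' b (by omega) hbp
        ha''Mem.2 hbMem.2
      refine finishC G p v z c hh1 _ hh2 (by omega) (by omega) hh3 ?_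
      have pin : ∀ e ∈ G.cycleChords c, e = s(z, v a') := by
        intro e he
        rcases hh4 e he with ⟨m, hm1, hm2, hmz, rfl⟩ | ⟨k, l, hk, hkl, hl, ha1, rfl⟩
        · have hmb : m = a' := by
            by_contra hmb
            have h1 : m ≤ a' := ha'Max m (by omega) hmz
            have h2 : m ≤ a'' := ha''Max m (by omega) hmz
            omega
          rw [hmb]
        · exfalso
          obtain ⟨t, ht0, htp, hk1, hl1⟩ := hEC0 k l hkl (by omega) ha1
          exact hchordIn ⟨t, ht0, htp, by rw [← hk1, ← hl1]; exact ha1, by omega, by omega⟩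
      intro e he e' he'
      rw [pin e he, pin e' he']

end NearObs

/-- If `G` has a near-obstruction `(P, z)`, then `G` has a Meyniel obstruction
contained in the subgraph induced by the vertices of `P` together with `z`. -/
theorem nearObstruction_hasMeynielObstruction {V : Type*} [Fintype V]
    (G : SimpleGraph V) (p : ℕ) (v : ℕ → V) (z : V)
    (h : G.IsNearObstruction p v z) :
    ∃ (u : V) (c : G.Walk u u), c.IsCycle ∧ Odd c.length ∧ 5 ≤ c.length ∧
      (G.cycleChords c).ncard ≤ 1 ∧
      ∀ x ∈ c.support, x ∈ insert z (v '' Set.Iic p) := by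
  obtain ⟨hOdd, hp3, hInj, hAdj, hForm, hUniq, hzne, hz0, hzp, hType⟩ := h
  have hPodd : p % 2 = 1 := Nat.odd_iff.1 hOdd
  have hEC0 : ∀ k l, k + 2 ≤ l → l ≤ p → G.Adj (v k) (v l) →
      ∃ t, 0 < t ∧ t < p - 1 ∧ k = t - 1 ∧ l = t + 1 := by
    intro k l h1 h2 ha
    exact hForm k l ⟨h1, h2, ha⟩
  -- a : least positive index with z ~ v a
  set a := sInf {k | 1 ≤ k ∧ G.Adj z (v k)} with hadef
  have haMem : 1 ≤ a ∧ G.Adj z (v a) := by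
    have hpmem : p ∈ {k | 1 ≤ k ∧ G.Adj z (v k)} := ⟨by omega, hzp⟩
    exact Nat.sInf_mem ⟨p, hpmem⟩
  have haMin : ∀ k, 1 ≤ k → k < a → ¬ G.Adj z (v k) := by
    intro k h1 h2 hadj
    exact Nat.notMem_of_lt_sInf h2 ⟨h1, hadj⟩
  have hap : a ≤ p := Nat.sInf_le (⟨by omega, hzp⟩ : p ∈ {k | 1 ≤ k ∧ G.Adj z (v k)})
  by_cases haodd : a % 2 = 1
  · by_cases ha3 : 3 ≤ a
    · -- Case A : C(0, a)
      obtain ⟨c, hc1, hc2, hc3, hc4⟩ := NearObs.cseg G p v z hInj hAdj hzne 0 a (by omega)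
        hap hz0 haMem.2
      refine NearObs.finishC G p v z c hc1 _ hc2 (by omega) (by omega) hc3 ?_
      have noZ : ∀ e ∈ G.cycleChords c,
          ∃ k l, 0 ≤ k ∧ k + 2 ≤ l ∧ l ≤ a ∧ G.Adj (v k) (v l) ∧ e = s(v k, v l) := by
        intro e he
        rcases hc4 e he with ⟨m, hm1, hm2, hmz, rfl⟩ | h
        · exact absurd hmz (haMin m (by omega) hm2)
        · exact h
      intro e he e' he'
      obtain ⟨k, l, hk, hkl, hl, ha1, rfl⟩ := noZ e he
      obtain ⟨k', l', hk', hkl', hl', ha1', rfl⟩ := noZ e' he'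
      obtain ⟨rfl, rfl⟩ := hUniq k l k' l' ⟨hkl, by omega, ha1⟩ ⟨hkl', by omega, ha1'⟩
      rfl
    · -- a = 1
      have ha1 : a = 1 := by omega
      have hz1 : G.Adj z (v 1) := ha1 ▸ haMem.2
      rcases hType with ⟨_, hn1, _⟩ | ⟨hc13, h13⟩ | ⟨_, hn1⟩ | ⟨hn02, hn13, _, hnz2⟩
      · exact absurd hz1 hn1
      · -- Type 2 with z ~ v 1 : the chord is v1 v3 and z is not adjacent to v3
        have hnz3 : ¬ G.Adj z (v 3) := by
          rcases h13 with h | h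
          · exact absurd hz1 h
          · exact h
        obtain ⟨t, ht0, htp, hte1, hte3⟩ := hEC0 1 3 (by omega) (by omega) hc13
        have ht2 : t = 2 := by omega
        have hp5 : 5 ≤ p := by omega
        have hECt : ∀ k l, l ≤ p → k + 2 ≤ l → G.Adj (v k) (v l) → k = 2 - 1 ∧ l = 2 + 1 := by
          intro k l hlp h2 hkl
          have := hUniq k l 1 3 ⟨h2, hlp, hkl⟩ ⟨by omega, by omega, hc13⟩
          omega
        have hch2 : G.Adj (v (2 - 1)) (v (2 + 1)) := hc13
        set m := sInf {k | 3 ≤ k ∧ G.Adj z (v k)} with hmdef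
        have hmMem : 3 ≤ m ∧ G.Adj z (v m) := by
          have hpmem : p ∈ {k | 3 ≤ k ∧ G.Adj z (v k)} := ⟨by omega, hzp⟩
          exact Nat.sInf_mem ⟨p, hpmem⟩
        have hmMin : ∀ k, 3 ≤ k → k < m → ¬ G.Adj z (v k) := by
          intro k h1 h2 hadj
          exact Nat.notMem_of_lt_sInf h2 ⟨h1, hadj⟩
        have hmp : m ≤ p := Nat.sInf_le (⟨by omega, hzp⟩ : p ∈ {k | 3 ≤ k ∧ G.Adj z (v k)})
        have hm4 : 4 ≤ m := by
          have : m ≠ 3 := fun hc => hnz3 (hc ▸ hmMem.2)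
          omega
        by_cases hmodd : m % 2 = 1
        · -- skip cycle z v1 v3 ... vm, no chords
          obtain ⟨c, hc1, hc2, hc3, hc4⟩ := NearObs.cskip G p v z hInj hAdj hzne 1 2 m
            (by omega) (by omega) hmp hz1 hmMem.2 hch2 hECt
          refine NearObs.finishC G p v z c hc1 _ hc2 (by omega) (by omega) hc3 ?_
          have pin : ∀ e ∈ G.cycleChords c, False := by
            intro e he
            obtain ⟨m', hm1, hm2, hm3, hmz, rfl⟩ := hc4 e he
            exact hmMin m' (by omega) (by omega) hmz
          intro e he e' he'
          exact (pin e he).elim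
        · -- skip cycle z v0 v1 v3 ... vm, one chord s(z, v 1)
          obtain ⟨c, hc1, hc2, hc3, hc4⟩ := NearObs.cskip G p v z hInj hAdj hzne 0 2 m
            (by omega) (by omega) hmp hz0 hmMem.2 hch2 hECt
          refine NearObs.finishC G p v z c hc1 _ hc2 (by omega) (by omega) hc3 ?_
          have pin : ∀ e ∈ G.cycleChords c, e = s(z, v 1) := by
            intro e he
            obtain ⟨m', hm1, hm2, hm3, hmz, rfl⟩ := hc4 e he
            have : m' = 1 := by
              by_contra hm1'
              exact hmMin m' (by omega) (by omega) hmz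
            rw [this]
          intro e he e' he'
          rw [pin e he, pin e' he']
      · exact absurd hz1 hn1
      · -- Type 4 with z ~ v 1
        set j := sInf {k | 2 ≤ k ∧ G.Adj z (v k)} with hjdef
        have hjMem : 2 ≤ j ∧ G.Adj z (v j) := by
          have hpmem : p ∈ {k | 2 ≤ k ∧ G.Adj z (v k)} := ⟨by omega, hzp⟩
          exact Nat.sInf_mem ⟨p, hpmem⟩
        have hjMin : ∀ k, 2 ≤ k → k < j → ¬ G.Adj z (v k) := by
          intro k h1 h2 hadj
          exact Nat.notMem_of_lt_sInf h2 ⟨h1, hadj⟩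
        have hjp : j ≤ p := Nat.sInf_le (⟨by omega, hzp⟩ : p ∈ {k | 2 ≤ k ∧ G.Adj z (v k)})
        have hj3 : 3 ≤ j := by
          have : j ≠ 2 := fun hc => hnz2 (hc ▸ hjMem.2)
          omega
        by_cases hje : j % 2 = 0
        · -- C(1, j)
          obtain ⟨c, hc1, hc2, hc3, hc4⟩ := NearObs.cseg G p v z hInj hAdj hzne 1 j (by omega)
            hjp hz1 hjMem.2
          refine NearObs.finishC G p v z c hc1 _ hc2 (by omega) (by omega) hc3 ?_
          have noZ : ∀ e ∈ G.cycleChords c,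
              ∃ k l, 1 ≤ k ∧ k + 2 ≤ l ∧ l ≤ j ∧ G.Adj (v k) (v l) ∧ e = s(v k, v l) := by
            intro e he
            rcases hc4 e he with ⟨m, hm1, hm2, hmz, rfl⟩ | h
            · exact absurd hmz (hjMin m (by omega) hm2)
            · exact h
          intro e he e' he'
          obtain ⟨k, l, hk, hkl, hl, ha1, rfl⟩ := noZ e he
          obtain ⟨k', l', hk', hkl', hl', ha1', rfl⟩ := noZ e' he'
          obtain ⟨rfl, rfl⟩ := hUniq k l k' l' ⟨hkl, by omega, ha1⟩ ⟨hkl', by omega, ha1'⟩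
          rfl
        · -- j odd
          by_cases hcr : ∃ t, 0 < t ∧ t < p - 1 ∧ G.Adj (v (t - 1)) (v (t + 1)) ∧ t + 1 ≤ j
          · obtain ⟨t, ht0, htp, htadj, htj⟩ := hcr
            have ht3 : 3 ≤ t := by
              rcases Nat.lt_or_ge t 3 with hlt | hge
              · interval_cases t
                · exact absurd htadj hn02
                · exact absurd htadj hn13
              · exact hge
            have hECt : ∀ k l, l ≤ p → k + 2 ≤ l → G.Adj (v k) (v l) →
                k = t - 1 ∧ l = t + 1 := by
              intro k l hlp h2 hkl
              exact hUniq k l (t - 1) (t + 1) ⟨h2, hlp, hkl⟩ ⟨by omega, by omega, htadj⟩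
            obtain ⟨c, hc1, hc2, hc3, hc4⟩ := NearObs.cskip G p v z hInj hAdj hzne 1 t j
              (by omega) htj hjp hz1 hjMem.2 htadj hECt
            refine NearObs.finishC G p v z c hc1 _ hc2 (by omega) (by omega) hc3 ?_
            have pin : ∀ e ∈ G.cycleChords c, False := by
              intro e he
              obtain ⟨m', hm1, hm2, hm3, hmz, rfl⟩ := hc4 e he
              exact hjMin m' (by omega) hm2 hmz
            intro e he e' he'
            exact (pin e he).elim
          · -- C(0, j) with one chord s(z, v 1)
            obtain ⟨c, hc1, hc2, hc3, hc4⟩ := NearObs.cseg G p v z hInj hAdj hzne 0 j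
              (by omega) hjp hz0 hjMem.2
            refine NearObs.finishC G p v z c hc1 _ hc2 (by omega) (by omega) hc3 ?_
            have pin : ∀ e ∈ G.cycleChords c, e = s(z, v 1) := by
              intro e he
              rcases hc4 e he with ⟨m, hm1, hm2, hmz, rfl⟩ | ⟨k, l, hk, hkl, hl, ha1, rfl⟩
              · have : m = 1 := by
                  by_contra hm1'
                  exact hjMin m (by omega) hm2 hmz
                rw [this]
              · exfalso
                obtain ⟨t, ht0, htp, hk1, hl1⟩ := hEC0 k l hkl (by omega) ha1
                exact hcr ⟨t, ht0, htp, by rw [← hk1, ← hl1]; exact ha1, by omega⟩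
            intro e he e' he'
            rw [pin e he, pin e' he']
  · -- a is even, so z is not adjacent to v 1
    have ha2 : 2 ≤ a := by omega
    have hnz1 : ¬ G.Adj z (v 1) := haMin 1 (by omega) (by omega)
    rcases hType with ⟨hc02, _, hnz2⟩ | ⟨hc13, _⟩ | ⟨hn02, _⟩ | ⟨_, _, hz1, _⟩
    · -- Type 1 : chord v0 v2, skip cycle z v0 v2 ... va
      obtain ⟨t, ht0, htp, hte1, hte3⟩ := hEC0 0 2 (by omega) (by omega) hc02
      have ht1 : t = 1 := by omega
      have ha4 : 4 ≤ a := by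
        have : a ≠ 2 := fun hc => hnz2 (hc ▸ haMem.2)
        omega
      have hECt : ∀ k l, l ≤ p → k + 2 ≤ l → G.Adj (v k) (v l) → k = 1 - 1 ∧ l = 1 + 1 := by
        intro k l hlp h2 hkl
        have := hUniq k l 0 2 ⟨h2, hlp, hkl⟩ ⟨by omega, by omega, hc02⟩
        omega
      have hch1 : G.Adj (v (1 - 1)) (v (1 + 1)) := hc02
      obtain ⟨c, hc1, hc2, hc3, hc4⟩ := NearObs.cskip G p v z hInj hAdj hzne 0 1 a
        (by omega) (by omega) hap hz0 haMem.2 hch1 hECt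
      refine NearObs.finishC G p v z c hc1 _ hc2 (by omega) (by omega) hc3 ?_
      have pin : ∀ e ∈ G.cycleChords c, False := by
        intro e he
        obtain ⟨m', hm1, hm2, hm3, hmz, rfl⟩ := hc4 e he
        exact haMin m' (by omega) hm2 hmz
      intro e he e' he'
      exact (pin e he).elim
    · -- Type 2 with z not adjacent to v 1 : machine
      refine NearObs.machine G p v z hOdd hp3 hInj hAdj hUniq hzne hz0 hzp hEC0 hnz1 ?_
      intro t ht0 htp htadj
      have := hUniq (t - 1) (t + 1) 1 3 ⟨by omega, by omega, htadj⟩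
        ⟨by omega, by omega, hc13⟩
      omega
    · -- Type 3 : machine
      refine NearObs.machine G p v z hOdd hp3 hInj hAdj hUniq hzne hz0 hzp hEC0 hnz1 ?_
      intro t ht0 htp htadj
      by_contra hc
      have ht1 : t = 1 := by omega
      rw [ht1] at htadj
      exact hn02 htadj
    · exact absurd hz1 hnz1
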